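/- Let P be a positive definite real n×n matrix, A a real n×n matrix with PA + A'P negative semidefinite, C a real p×n matrix, and α > 0. Then for every solution ε of the linear ODE ε̇ = (A - αP⁻¹C'C)ε, the function t ↦ ε(t)'Pε(t) is nonincreasing; more precisely its derivative satisfies d/dt (ε'Pε) ≤ -2α|Cε|². -/

import Mathlib

open Matrix Filter

lemma mulVec_dot {n m : ℕ} (M : Matrix (Fin m) (Fin n) ℝ) (x : Fin n → ℝ) (y : Fin m → ℝ) :
    (M *ᵥ x) ⬝ᵥ y = x ⬝ᵥ (Mᵀ *ᵥ y) := by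
  simp only [dotProduct, mulVec, dotProduct, transpose_apply, Finset.sum_mul, Finset.mul_sum]
  rw [Finset.sum_comm]
  apply Finset.sum_congr rfl; intro i _; apply Finset.sum_congr rfl; intro j _; ring

lemma quad_deriv {n : ℕ} (P : Matrix (Fin n) (Fin n) ℝ) (ε : ℝ → Fin n → ℝ)
    (v : Fin n → ℝ) (t : ℝ) (h : HasDerivAt ε v t) :
    HasDerivAt (fun s => ε s ⬝ᵥ P *ᵥ ε s)
      (v ⬝ᵥ P *ᵥ ε t + ε t ⬝ᵥ P *ᵥ v) t := by
  have hc : ∀ i, HasDerivAt (fun s => ε s i) (v i) t := hasDerivAt_pi.mp h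
  have : HasDerivAt (fun s => ∑ i, ε s i * ∑ j, P i j * ε s j)
      (∑ i, (v i * ∑ j, P i j * ε t j + ε t i * ∑ j, P i j * v j)) t := by
    apply HasDerivAt.fun_sum
    intro i _
    exact (hc i).mul (HasDerivAt.fun_sum fun j _ => (hc j).const_mul (P i j))
  have heq : (v ⬝ᵥ P *ᵥ ε t + ε t ⬝ᵥ P *ᵥ v)
      = ∑ i, (v i * ∑ j, P i j * ε t j + ε t i * ∑ j, P i j * v j) := by
    simp [dotProduct, mulVec, Finset.sum_add_distrib]
  rw [heq]
  exact this

/-- dissipativity implies the Lyapunov function V(ε)=ε'Pε is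
nonincreasing along solutions of ε̇ = (A - αP⁻¹C'C)ε, with
d/dt (ε'Pε) ≤ -2α|Cε|². -/
theorem stmt0 {n p : ℕ}
    (P A : Matrix (Fin n) (Fin n) ℝ) (C : Matrix (Fin p) (Fin n) ℝ)
    (hP : P.PosDef)
    (hdiss : ∀ x : Fin n → ℝ, x ⬝ᵥ (P * A + Aᵀ * P) *ᵥ x ≤ 0)
    (α : ℝ) (hα : 0 < α)
    (ε : ℝ → Fin n → ℝ)
    (hε : ∀ t, HasDerivAt ε ((A - α • (P⁻¹ * Cᵀ * C)) *ᵥ ε t) t) :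
    (∀ t, deriv (fun s => ε s ⬝ᵥ P *ᵥ ε s) t
        ≤ -2 * α * ((C *ᵥ ε t) ⬝ᵥ (C *ᵥ ε t))) ∧
    Antitone (fun t => ε t ⬝ᵥ P *ᵥ ε t) := by
  have hPdet : IsUnit P.det := isUnit_iff_ne_zero.mpr hP.det_pos.ne'
  have hPinv : P * P⁻¹ = 1 := mul_nonsing_inv P hPdet
  have hPsym : Pᵀ = P := hP.1.eq
  have hPinvsym : (P⁻¹)ᵀ = P⁻¹ := by rw [transpose_nonsing_inv, hPsym]
  have hderiv : ∀ t, HasDerivAt (fun s => ε s ⬝ᵥ P *ᵥ ε s)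
      (ε t ⬝ᵥ (P * A + Aᵀ * P) *ᵥ ε t - 2 * α * ((C *ᵥ ε t) ⬝ᵥ (C *ᵥ ε t))) t := by
    intro t
    have h := quad_deriv P ε _ t (hε t)
    convert h using 1
    set x := ε t
    set M := A - α • (P⁻¹ * Cᵀ * C)
    have e1 : (M *ᵥ x) ⬝ᵥ P *ᵥ x = x ⬝ᵥ (Mᵀ * P) *ᵥ x := by
      rw [mulVec_dot, mulVec_mulVec]
    have e2 : x ⬝ᵥ P *ᵥ (M *ᵥ x) = x ⬝ᵥ (P * M) *ᵥ x := by rw [mulVec_mulVec]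
    rw [e1, e2]
    have hMP : Mᵀ * P = Aᵀ * P - α • (Cᵀ * C) := by
      simp only [M, transpose_sub, transpose_smul, transpose_mul, hPinvsym, hPsym,
        sub_mul, smul_mul_assoc]
      congr 1
      simp [Matrix.mul_assoc, nonsing_inv_mul P hPdet, transpose_transpose]
    have hPM : P * M = P * A - α • (Cᵀ * C) := by
      simp only [M, Matrix.mul_sub, Matrix.mul_smul]
      congr 1
      rw [← Matrix.mul_assoc, ← Matrix.mul_assoc, hPinv, Matrix.one_mul]
    rw [hMP, hPM]
    have hCC : x ⬝ᵥ (Cᵀ * C) *ᵥ x = (C *ᵥ x) ⬝ᵥ (C *ᵥ x) := by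
      rw [mulVec_dot, ← mulVec_mulVec]
    simp only [sub_mulVec, dotProduct_sub, smul_mulVec, dotProduct_smul, hCC,
      add_mulVec, dotProduct_add, smul_eq_mul]
    ring
  constructor
  · intro t
    rw [(hderiv t).deriv]
    have := hdiss (ε t)
    linarith
  · apply antitone_of_deriv_nonpos
    · exact fun t => (hderiv t).differentiableAt
    · intro t
      rw [(hderiv t).deriv]
      have h1 := hdiss (ε t)
      have h2 : 0 ≤ (C *ᵥ ε t) ⬝ᵥ (C *ᵥ ε t) := Finset.sum_nonneg fun i _ => mul_self_nonneg _
      nlinarith
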